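/- Let W > 0, λ > 0, t_C ≥ 0 and D > 0 be real constants, and let T(s) = (W/s + t_C)·(1 + λ·(W/s + t_C)) for s > 0. Then T is strictly decreasing on (0, ∞) and tends to t_C + λ·t_C² as s → +∞. Consequently: (i) if D ≤ t_C + λ·t_C², then there is no s > 0 with T(s) ≤ D; (ii) if D > t_C + λ·t_C², then for every s > 0 one has T(s) ≤ D if and only if s ≥ s₀, where s₀ = W·(1 + 2λ·t_C + √(4λ·D + 1)) / (2·(D − t_C·(1 + λ·t_C))); moreover T(s₀) = D. -/

import Mathlib

open Real Filter Set

/-- The expected execution time `T(s) = (W/s + t_C)(1 + λ (W/s + t_C))`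
is strictly decreasing on `(0, ∞)` and tends to `t_C + λ t_C²` at `+∞`; if
`D ≤ t_C + λ t_C²` no speed meets the deadline; otherwise `T(s) ≤ D ↔ s ≥ s₀` with
`s₀ = W (1 + 2 λ t_C + √(4 λ D + 1)) / (2 (D − t_C (1 + λ t_C)))` and `T(s₀) = D`. -/
theorem stmt_2 (W lam tC D : ℝ) (hW : 0 < W) (hlam : 0 < lam) (htC : 0 ≤ tC)
    (hD : 0 < D) :
    StrictAntiOn (fun s : ℝ => (W / s + tC) * (1 + lam * (W / s + tC)))
      (Set.Ioi (0 : ℝ)) ∧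
    Tendsto (fun s : ℝ => (W / s + tC) * (1 + lam * (W / s + tC))) atTop
      (nhds (tC + lam * tC ^ 2)) ∧
    (D ≤ tC + lam * tC ^ 2 →
      ¬ ∃ s : ℝ, 0 < s ∧ (W / s + tC) * (1 + lam * (W / s + tC)) ≤ D) ∧
    (tC + lam * tC ^ 2 < D →
      ∀ s0 : ℝ, s0 = W * (1 + 2 * lam * tC + Real.sqrt (4 * lam * D + 1)) /
          (2 * (D - tC * (1 + lam * tC))) →
        (∀ s : ℝ, 0 < s →
          ((W / s + tC) * (1 + lam * (W / s + tC)) ≤ D ↔ s0 ≤ s)) ∧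
        (W / s0 + tC) * (1 + lam * (W / s0 + tC)) = D) := by
  have hanti : StrictAntiOn (fun s : ℝ => (W / s + tC) * (1 + lam * (W / s + tC)))
      (Set.Ioi (0 : ℝ)) := by
    intro a ha b hb hab
    simp only [Set.mem_Ioi] at ha hb
    have h1 : W / b < W / a := div_lt_div_of_pos_left hW ha hab
    have h2 : 0 < W / b := div_pos hW hb
    have h3 : 0 < W / a := div_pos hW ha
    have hx : 0 < W / b + tC := by linarith
    have hy : 0 < W / a + tC := by linarith
    simp only
    nlinarith [mul_pos hlam (add_pos hx hy)]
  refine ⟨hanti, ?_, ?_, ?_⟩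
  · have hdiv : Tendsto (fun s : ℝ => W / s) atTop (nhds 0) :=
      Tendsto.div_atTop tendsto_const_nhds tendsto_id
    have hu : Tendsto (fun s : ℝ => W / s + tC) atTop (nhds (0 + tC)) :=
      hdiv.add tendsto_const_nhds
    have h2 := hu.mul ((hu.const_mul lam).const_add 1)
    have heq : tC + lam * tC ^ 2 = (0 + tC) * (1 + lam * (0 + tC)) := by ring
    rw [heq]
    exact h2
  · rintro hle ⟨s, hs, hT⟩
    have h2 : 0 < W / s := div_pos hW hs
    nlinarith [mul_pos hlam h2, mul_nonneg (mul_pos hlam h2).le htC]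
  · intro hlt s0 hs0
    have hrpos : (0:ℝ) < 4 * lam * D + 1 := by positivity
    have hr0 : 0 ≤ Real.sqrt (4 * lam * D + 1) := Real.sqrt_nonneg _
    have hr2 : Real.sqrt (4 * lam * D + 1) ^ 2 = 4 * lam * D + 1 :=
      Real.sq_sqrt hrpos.le
    set r := Real.sqrt (4 * lam * D + 1) with hrdef
    have hE : 0 < D - tC * (1 + lam * tC) := by nlinarith
    have hc : 1 + 2 * lam * tC < r := by
      nlinarith [mul_nonneg hlam.le htC]
    have hcpos : 0 < 1 + 2 * lam * tC + r := by
      nlinarith [mul_nonneg hlam.le htC]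
    have hs0pos : 0 < s0 := by
      rw [hs0]
      exact div_pos (mul_pos hW hcpos) (by linarith)
    have hkey : W / s0 + tC = (r - 1) / (2 * lam) := by
      have h1 : (1 + 2 * lam * tC + r) ≠ 0 := ne_of_gt hcpos
      have h2 : D - tC * (1 + lam * tC) ≠ 0 := ne_of_gt hE
      rw [hs0]
      field_simp
      ring_nf
      nlinarith [hr2]
    have hT0 : (W / s0 + tC) * (1 + lam * (W / s0 + tC)) = D := by
      rw [hkey]
      field_simp
      nlinarith [hr2]
    refine ⟨fun s hs => ⟨fun hle => ?_, fun hge => ?_⟩, hT0⟩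
    · by_contra h
      push_neg at h
      have := hanti hs hs0pos h
      simp only at this
      rw [hT0] at this
      linarith
    · have := hanti.antitoneOn hs0pos hs hge
      rw [hT0] at this
      linarith
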